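/- Let v_1, …, v_m be vectors in ℝ^n and c_1, …, c_m real numbers. Suppose there exist ε > 0 and a convex function g : ℝ^n → ℝ such that g(t • v_i) = t * c_i for every i and every t ∈ [0, ε]. Then for all nonnegative real numbers λ_1, …, λ_m with Σ_i λ_i • v_i = 0 one has Σ_i λ_i * c_i ≥ 0. -/

import Mathlib

/-- If the positively homogeneous extension of the values `c i` along the
rays spanned by `v i` is locally (near the origin) the restriction of a convex function
`g` on `ℝ^n`, then every nonnegative linear relation among the `v i` is respected by the
values `c i`. -/
theorem convexity_criterion_forward {n m : ℕ}
    (v : Fin m → (Fin n → ℝ)) (c : Fin m → ℝ)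
    (hconv : ∃ ε > (0 : ℝ), ∃ g : (Fin n → ℝ) → ℝ, ConvexOn ℝ Set.univ g ∧
      ∀ i : Fin m, ∀ t ∈ Set.Icc (0 : ℝ) ε, g (t • v i) = t * c i) :
    ∀ lam : Fin m → ℝ, (∀ i, 0 ≤ lam i) → (∑ i, lam i • v i = 0) →
      0 ≤ ∑ i, lam i * c i := by
  obtain ⟨ε, hε, g, hg, hgv⟩ := hconv
  intro lam hlam hsum
  set S := ∑ i, lam i with hS
  have hS0 : 0 ≤ S := Finset.sum_nonneg fun i _ => hlam i
  rcases eq_or_lt_of_le hS0 with hS0' | hS0'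
  · -- all lam i = 0
    have : ∀ i ∈ Finset.univ, lam i = 0 := by
      intro i _
      have := (Finset.sum_eq_zero_iff_of_nonneg (fun i _ => hlam i)).mp hS0'.symm
      exact this i (Finset.mem_univ i)
    rw [Finset.sum_congr rfl (fun i hi => by rw [this i hi, zero_mul])]
    simp
  · -- S > 0; apply Jensen with weights lam i / S and points (ε) • v i... use t = ε / S
    set t := ε / S with ht
    have htpos : 0 < t := div_pos hε hS0'
    have hg0 : g 0 = 0 := by
      by_cases hm : m = 0
      · subst hm
        rw [show S = 0 from by simp [hS]] at hS0'
        exact absurd hS0' (lt_irrefl 0)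
      · obtain ⟨i⟩ := Fin.pos_iff_nonempty.mp (Nat.pos_of_ne_zero hm)
        have := hgv i 0 ⟨le_refl 0, le_of_lt hε⟩
        simpa using this
      -- fallback
    have hjensen := hg.map_sum_le (t := Finset.univ) (w := fun i => lam i / S)
      (p := fun i => (t * S) • v i)
      (fun i _ => div_nonneg (hlam i) hS0)
      (by rw [← Finset.sum_div]; exact div_self hS0'.ne')
      (fun i _ => Set.mem_univ _)
    have hpt : ∀ i, (lam i / S) • ((t * S) • v i) = t • (lam i • v i) := by
      intro i
      rw [smul_smul, smul_smul]
      congr 1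
      field_simp
    have hL : (∑ i, (fun i => lam i / S) i • (fun i => (t * S) • v i) i) = 0 := by
      rw [Finset.sum_congr rfl (fun i _ => hpt i), ← Finset.smul_sum, hsum, smul_zero]
    rw [hL, hg0] at hjensen
    have htS : t * S = ε := div_mul_cancel₀ ε hS0'.ne'
    have hval : ∀ i, g ((t * S) • v i) = (t * S) * c i := by
      intro i
      exact hgv i (t * S) ⟨by rw [htS]; exact hε.le, by rw [htS]⟩
    have : (0:ℝ) ≤ ∑ i, (lam i / S) * ((t * S) * c i) := by
      calc (0:ℝ) ≤ ∑ i, (lam i / S) • g ((t * S) • v i) := hjensen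
        _ = ∑ i, (lam i / S) * ((t * S) * c i) := by
            exact Finset.sum_congr rfl (fun i _ => by rw [smul_eq_mul, hval i])
    have heq : ∑ i, (lam i / S) * ((t * S) * c i) = t * ∑ i, lam i * c i := by
      calc ∑ i, (lam i / S) * ((t * S) * c i) = ∑ i, t * (lam i * c i) :=
            Finset.sum_congr rfl fun i _ => by
              calc lam i / S * (t * S * c i) = (S / S) * (t * (lam i * c i)) := by ring
                _ = t * (lam i * c i) := by rw [div_self hS0'.ne', one_mul]
        _ = t * ∑ i, lam i * c i := by rw [← Finset.mul_sum]
    rw [heq] at this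
    exact (mul_nonneg_iff_of_pos_left htpos).mp this
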